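/- Let μ ∈ (0, 1/2), and reals ε_a, ε_b, β with |ε_a|, |ε_b| ≤ ε and |β| ≤ B, and suppose (1−μ)(1−α) + ε_x + (ε_a+ε_b)β > 1/2 for x ∈ {a,b} and (1−μ)(1−α) + ε_x > 1/2. Then |[((1−μ)(1−α)+ε_a+(ε_a+ε_b)β)/((1−μ)(1−α)+ε_b+(ε_a+ε_b)β)] · [((1−μ)(1−α)+ε_b)/((1−μ)(1−α)+ε_a)] − 1| ≤ 16·ε²·B. -/
import Mathlib

/-- the cancellation estimate for the ratio product. -/
theorem stmt10 (α μ εa εb β ε B : ℝ)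
    (hμ0 : 0 < μ) (hμ : μ < 1 / 2)
    (hεa : |εa| ≤ ε) (hεb : |εb| ≤ ε) (hβ : |β| ≤ B)
    (h1 : (1 - μ) * (1 - α) + εa + (εa + εb) * β > 1 / 2)
    (h2 : (1 - μ) * (1 - α) + εb + (εa + εb) * β > 1 / 2)
    (h3 : (1 - μ) * (1 - α) + εa > 1 / 2)
    (h4 : (1 - μ) * (1 - α) + εb > 1 / 2) :
    |(((1 - μ) * (1 - α) + εa + (εa + εb) * β) /
        ((1 - μ) * (1 - α) + εb + (εa + εb) * β)) *
      (((1 - μ) * (1 - α) + εb) / ((1 - μ) * (1 - α) + εa)) - 1|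
      ≤ 16 * ε ^ 2 * B := by
  set t := (1 - μ) * (1 - α) with ht
  have hdenpos : 0 < (t + εb + (εa + εb) * β) * (t + εa) :=
    mul_pos (by linarith) (by linarith)
  have hden4 : (1:ℝ)/4 ≤ (t + εb + (εa + εb) * β) * (t + εa) := by nlinarith
  have hεnn : 0 ≤ ε := le_trans (abs_nonneg _) hεa
  have hBnn : 0 ≤ B := le_trans (abs_nonneg _) hβ
  rw [div_mul_div_comm, div_sub_one (ne_of_gt hdenpos), abs_div, abs_of_pos hdenpos]
  have hnum : |(t + εa + (εa + εb) * β) * (t + εb) -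
      (t + εb + (εa + εb) * β) * (t + εa)| ≤ 2 * ε ^ 2 * B := by
    have heq : (t + εa + (εa + εb) * β) * (t + εb) -
        (t + εb + (εa + εb) * β) * (t + εa) = (εb ^ 2 - εa ^ 2) * β := by ring
    rw [heq, abs_mul]
    have ha := abs_le.mp hεa
    have hb := abs_le.mp hεb
    have h1' : |εb ^ 2 - εa ^ 2| ≤ 2 * ε ^ 2 := by
      rw [abs_le]; constructor <;> nlinarith
    exact mul_le_mul h1' hβ (abs_nonneg _) (by positivity)
  rw [div_le_iff₀ hdenpos]
  nlinarith [abs_nonneg ((t + εa + (εa + εb) * β) * (t + εb) -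
    (t + εb + (εa + εb) * β) * (t + εa)), mul_nonneg (mul_nonneg (sq_nonneg ε) hBnn) (le_of_lt hdenpos)]
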